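/- Let (X, ‖·‖, ‖·‖_L) be a Lip-space and n ∈ ℕ. If the set {x ∈ X : ‖x‖_L ≤ 1} can be covered by n norm-balls of radius 1, then ‖x‖ ≤ 2n·‖x‖_L for every x ∈ X. -/

import Mathlib

open scoped ENNReal

/-- A Lip-space: a real Banach space `X` together with an extended-real-valued "Lip-norm"
`lipNorm : X → [0,∞]` which is finite on a dense linear subspace on which it is a norm
(subadditive, absolutely homogeneous, vanishing only at `0`), and whose unit ball
`{x : X | lipNorm x ≤ 1}` is compact in the norm topology of `X`. -/
structure LipSpace (X : Type*) [NormedAddCommGroup X] [NormedSpace ℝ X] [CompleteSpace X] where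
  lipNorm : X → ℝ≥0∞
  lipNorm_add_le : ∀ x y : X, lipNorm (x + y) ≤ lipNorm x + lipNorm y
  lipNorm_smul : ∀ (c : ℝ) (x : X), lipNorm (c • x) = (‖c‖₊ : ℝ≥0∞) * lipNorm x
  lipNorm_eq_zero : ∀ x : X, lipNorm x = 0 → x = 0
  dense_finite : Dense {x : X | lipNorm x < ⊤}
  isCompact_unitBall : IsCompact {x : X | lipNorm x ≤ 1}


/-- If the Lip-unit ball `{x : ‖x‖_L ≤ 1}` of a Lip-space can be covered
by `n` norm-balls of radius `1`, then `‖x‖ ≤ 2 n ‖x‖_L` for every `x ∈ X`. -/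
theorem stmt4 {X : Type*} [NormedAddCommGroup X] [NormedSpace ℝ X] [CompleteSpace X]
    (S : LipSpace X) (n : ℕ) (t : Finset X) (hcard : t.card ≤ n)
    (hcover : {x : X | S.lipNorm x ≤ 1} ⊆ ⋃ c ∈ t, Metric.closedBall c 1) :
    ∀ x : X, (‖x‖₊ : ℝ≥0∞) ≤ 2 * n * S.lipNorm x := by
  classical
  -- lipNorm 0 = 0
  have h0 : S.lipNorm 0 = 0 := by
    have := S.lipNorm_smul 0 0
    simpa using this
  -- n ≥ 1
  have hn : 1 ≤ n := by
    have h0mem : (0 : X) ∈ ⋃ c ∈ t, Metric.closedBall c 1 := hcover (by simp [h0])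
    simp only [Set.mem_iUnion] at h0mem
    obtain ⟨c, hc, -⟩ := h0mem
    calc 1 ≤ t.card := Finset.card_pos.mpr ⟨c, hc⟩
      _ ≤ n := hcard
  have hnR : (0 : ℝ) < n := by exact_mod_cast hn
  -- key: the Lip unit ball has norm ≤ 2n
  have key : ∀ y : X, S.lipNorm y ≤ 1 → ‖y‖ ≤ 2 * n := by
    intro y hy
    by_contra hcon
    push_neg at hcon
    -- the n+1 points (j/n) • y all lie in the Lip unit ball
    have hmem : ∀ j : Fin (n + 1), S.lipNorm (((j : ℝ) / n) • y) ≤ 1 := by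
      intro j
      rw [S.lipNorm_smul]
      have hjn : ‖((j : ℝ) / n)‖₊ ≤ 1 := by
        rw [← NNReal.coe_le_coe]
        simp only [coe_nnnorm, Real.norm_eq_abs, NNReal.coe_one]
        rw [abs_div, abs_of_nonneg (by positivity : (0:ℝ) ≤ (j:ℝ)),
          abs_of_pos hnR, div_le_one hnR]
        exact_mod_cast Nat.lt_succ_iff.mp j.isLt
      calc (‖((j : ℝ) / n)‖₊ : ℝ≥0∞) * S.lipNorm y ≤ 1 * 1 := by
            exact mul_le_mul' (by exact_mod_cast hjn) hy
        _ = 1 := one_mul 1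
    have hc : ∀ j : Fin (n + 1), ∃ c, c ∈ t ∧
        ((j : ℝ) / n) • y ∈ Metric.closedBall c 1 := by
      intro j
      have := hcover (hmem j)
      simpa only [Set.mem_iUnion, exists_prop] using this
    choose g hg1 hg2 using hc
    have hcardlt : Fintype.card { c // c ∈ t } < Fintype.card (Fin (n + 1)) := by
      simpa [Fintype.card_coe] using Nat.lt_succ_of_le hcard
    obtain ⟨i, j, hij, hgij⟩ :=
      Fintype.exists_ne_map_eq_of_card_lt
        (fun j : Fin (n + 1) => (⟨g j, hg1 j⟩ : { c // c ∈ t })) hcardlt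
    have hgij' : g i = g j := by simpa using congrArg Subtype.val hgij
    -- both points are in the same ball of radius 1, so distance ≤ 2
    have hd2 : dist (((i : ℝ) / n) • y) (((j : ℝ) / n) • y) ≤ 2 := by
      calc dist (((i : ℝ) / n) • y) (((j : ℝ) / n) • y)
          ≤ dist (((i : ℝ) / n) • y) (g i) + dist (g i) (((j : ℝ) / n) • y) :=
            dist_triangle _ _ _
        _ ≤ 1 + 1 := by
            refine add_le_add (Metric.mem_closedBall.mp (hg2 i)) ?_
            rw [dist_comm, hgij']
            exact Metric.mem_closedBall.mp (hg2 j)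
        _ = 2 := by norm_num
    -- but actual distance is > 2
    have habs : (1 : ℝ) ≤ |(i : ℝ) - (j : ℝ)| := by
      have hne : (i : ℤ) ≠ (j : ℤ) := by
        simp only [Ne, Int.natCast_inj]
        exact fun h => hij (Fin.ext h)
      have := Int.one_le_abs (sub_ne_zero.mpr hne)
      exact_mod_cast this
    have hdist : dist (((i : ℝ) / n) • y) (((j : ℝ) / n) • y)
        = |(i : ℝ) - (j : ℝ)| / n * ‖y‖ := by
      rw [dist_eq_norm, ← sub_smul, norm_smul, Real.norm_eq_abs]
      rw [div_sub_div_same, abs_div, abs_of_pos hnR]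
    rw [hdist, div_mul_eq_mul_div] at hd2
    have h2 : |(i : ℝ) - (j : ℝ)| * ‖y‖ ≤ 2 * n := (div_le_iff₀ hnR).mp hd2
    have h1 : ‖y‖ ≤ |(i : ℝ) - (j : ℝ)| * ‖y‖ :=
      le_mul_of_one_le_left (norm_nonneg y) habs
    linarith
  -- now the general case by rescaling
  intro x
  rcases eq_or_ne (S.lipNorm x) ⊤ with htop | htop
  · rw [htop]
    have h2n : (2 * n : ℝ≥0∞) ≠ 0 := by
      have hn0 : n ≠ 0 := by omega
      simp [hn0]
    rw [ENNReal.mul_top h2n]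
    exact le_top
  rcases eq_or_ne x 0 with rfl | hx0
  · simp
  have hL0 : S.lipNorm x ≠ 0 := fun h => hx0 (S.lipNorm_eq_zero x h)
  set a : ℝ := (S.lipNorm x).toReal with ha
  have ha0 : 0 < a := ENNReal.toReal_pos hL0 htop
  have haL : ENNReal.ofReal a = S.lipNorm x := ENNReal.ofReal_toReal htop
  have hy : S.lipNorm (a⁻¹ • x) ≤ 1 := by
    rw [S.lipNorm_smul]
    have : (‖a⁻¹‖₊ : ℝ≥0∞) = ENNReal.ofReal a⁻¹ := by
      rw [← enorm_eq_nnnorm, ← ofReal_norm, Real.norm_eq_abs,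
        abs_of_pos (by positivity)]
    rw [this, ← haL, ← ENNReal.ofReal_mul (by positivity),
      inv_mul_cancel₀ ha0.ne']
    simp
  have hnorm : ‖a⁻¹ • x‖ ≤ 2 * n := key _ hy
  have hxnorm : ‖x‖ ≤ 2 * n * a := by
    rw [norm_smul, Real.norm_eq_abs, abs_of_pos (by positivity : (0:ℝ) < a⁻¹)] at hnorm
    calc ‖x‖ = a⁻¹ * ‖x‖ * a := by field_simp
      _ ≤ 2 * n * a := mul_le_mul_of_nonneg_right hnorm ha0.le
  calc (‖x‖₊ : ℝ≥0∞) = ENNReal.ofReal ‖x‖ := (ofReal_norm x).symm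
    _ ≤ ENNReal.ofReal (2 * n * a) := ENNReal.ofReal_le_ofReal hxnorm
    _ = ENNReal.ofReal (2 * n) * ENNReal.ofReal a :=
        ENNReal.ofReal_mul (by positivity)
    _ = 2 * n * S.lipNorm x := by
        rw [haL]
        congr 1
        rw [ENNReal.ofReal_mul (by norm_num)]
        simp [ENNReal.ofReal_ofNat]
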